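/- arXiv:2401.06573 — 2 statements merged into one kernel-verified Lean document; each statement's English description precedes it below -/
import Mathlib

section
/- Let G be a non-complete connected graph on n vertices such that there exists a complete subgraph K_s on s vertices with the property that any two maximal cliques of G intersect exactly in K_s. Then κ(G) = s, f(G) = n − s, and d(G) = 2. -/
open MvPolynomial

/-- A vertex `v` is a *free* vertex of `G` if the induced subgraph of `G` on the
neighbourhood `N_G(v)` is complete. -/
def IsFreeVertex {V : Type} (G : SimpleGraph V) (v : V) : Prop :=
  ∀ u ∈ G.neighborSet v, ∀ w ∈ G.neighborSet v, u ≠ w → G.Adj u w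

/-- `f(G)`: the number of free vertices of `G`. -/
noncomputable def freeCount {V : Type} (G : SimpleGraph V) : ℕ :=
  Set.ncard {v | IsFreeVertex G v}

/-- `i(G)`: the number of isolated vertices of `G`. -/
noncomputable def isolatedCount {V : Type} (G : SimpleGraph V) : ℕ :=
  Set.ncard {v | ∀ u, ¬ G.Adj v u}

/-- The diameter of a connected component `c` of `G`: the maximal distance in `G` between
two vertices of `c`. -/
noncomputable def compDiam {V : Type} (G : SimpleGraph V) (c : G.ConnectedComponent) : ℕ :=
  sSup {d | ∃ u w : V, G.connectedComponentMk u = c ∧ G.connectedComponentMk w = c ∧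
    G.dist u w = d}

/-- `d(G) = i(G) + Σᵢ diam(Gᵢ)`: the number of isolated vertices of `G` plus the sum of the
diameters of the connected components of `G`. -/
noncomputable def dVal {V : Type} (G : SimpleGraph V) : ℕ :=
  isolatedCount G + ∑ᶠ c : G.ConnectedComponent, compDiam G c

/-- `t(G)`: the number of connected components of `G`. -/
noncomputable def numComponents {V : Type} (G : SimpleGraph V) : ℕ :=
  Nat.card G.ConnectedComponent

/-- The vertex-connectivity `κ(G)`: the minimum cardinality of a set `T` of vertices such
that `G − T` is disconnected (i.e. has two vertices not joined by any path). -/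
noncomputable def kappaVal {V : Type} (G : SimpleGraph V) : ℕ :=
  sInf {r | ∃ T : Set V, T.ncard = r ∧ ¬ (G.induce Tᶜ).Preconnected}

/-- `G_v`: the graph with `V(G_v) = V(G)` and
`E(G_v) = E(G) ∪ {{u,w} : u, w ∈ N_G(v)}`. -/
def cliqueCompletion {V : Type} (G : SimpleGraph V) (v : V) : SimpleGraph V where
  Adj u w := G.Adj u w ∨ (u ≠ w ∧ G.Adj v u ∧ G.Adj v w)
  symm := by
    constructor
    intro a b h
    rcases h with h | ⟨hne, h1, h2⟩
    · exact Or.inl h.symm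
    · exact Or.inr ⟨hne.symm, h2, h1⟩
  loopless := by
    constructor
    intro a h
    rcases h with h | ⟨hne, _, _⟩
    · exact G.ne_of_adj h rfl
    · exact hne rfl

/-- `G − v`: the induced subgraph of `G` on `V(G) ∖ {v}`. -/
def deleteVertex {V : Type} (G : SimpleGraph V) (v : V) : SimpleGraph {u : V | u ≠ v} :=
  G.induce {u : V | u ≠ v}

/-- `G` is a disjoint union of complete graphs, i.e. every connected component of `G`
is a complete graph. -/
def IsDisjointUnionOfCompletes {V : Type} (G : SimpleGraph V) : Prop :=
  ∀ u w : V, G.Reachable u w → u = w ∨ G.Adj u w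

/-- The generalized binomial edge ideal `J_{K_m,G} ⊆ S = K[x_{ij} : i ∈ [m], j ∈ [n]]` of a
graph `G` on `[n]`: the ideal generated by the 2-minors
`x_{ik}x_{jl} − x_{il}x_{jk}` for `1 ≤ i < j ≤ m` and edges `{k,l}` of `G` with `k < l`. -/
noncomputable def genBinomialEdgeIdeal (K : Type) [Field K] (m n : ℕ)
    (G : SimpleGraph (Fin n)) : Ideal (MvPolynomial (Fin m × Fin n) K) :=
  Ideal.span {f | ∃ (i j : Fin m) (k l : Fin n), i < j ∧ k < l ∧ G.Adj k l ∧
    f = X (i, k) * X (j, l) - X (i, l) * X (j, k)}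

/-- The depth of `S/J` with respect to the maximal homogeneous ideal
`𝔪 = (x_s : s ∈ σ)` of the polynomial ring `S = K[x_s : s ∈ σ]`: the supremum of the
lengths of `S/J`-regular sequences consisting of elements of `𝔪`. -/
noncomputable def quotDepth (K : Type) [Field K] {σ : Type} (J : Ideal (MvPolynomial σ K)) : ℕ :=
  sSup {r | ∃ rs : List (MvPolynomial σ K), rs.length = r ∧
    (∀ f ∈ rs, f ∈ Ideal.span (Set.range (X : σ → MvPolynomial σ K))) ∧
    RingTheory.Sequence.IsRegular (MvPolynomial σ K ⧸ J) rs}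

/-- A *maximal clique* of `G`: a set of vertices inducing a complete subgraph, maximal
under inclusion among such sets. -/
def IsMaxClique {V : Type} (G : SimpleGraph V) (C : Set V) : Prop :=
  G.IsClique C ∧ ∀ D : Set V, G.IsClique D → C ⊆ D → D = C


lemma exists_maxClique_superset {n : ℕ} (G : SimpleGraph (Fin n)) {S : Set (Fin n)}
    (hS : G.IsClique S) : ∃ C, IsMaxClique G C ∧ S ⊆ C := by
  obtain ⟨C, hC, hmax⟩ := Set.Finite.exists_maximalFor id {D | G.IsClique D ∧ S ⊆ D}
    (Set.toFinite _) ⟨S, hS, subset_rfl⟩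
  exact ⟨C, ⟨hC.1, fun D hD hCD => le_antisymm (hmax ⟨hD, hC.2.trans hCD⟩ hCD) hCD⟩, hC.2⟩

/-- if `G` is a connected non-complete graph on `n` vertices such that any
two (distinct) maximal cliques of `G` intersect exactly in a fixed complete subgraph `K_s`
(with vertex set `A`, `|A| = s`), then `κ(G) = s`, `f(G) = n − s` and `d(G) = 2`. -/
theorem H1_invariants (n s : ℕ) (G : SimpleGraph (Fin n)) (hconn : G.Connected) (hnc : G ≠ ⊤)
    (A : Set (Fin n)) (hA : G.IsClique A) (hAcard : A.ncard = s)
    (hint : ∀ C D : Set (Fin n), IsMaxClique G C → IsMaxClique G D → C ≠ D → C ∩ D = A) :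
    kappaVal G = s ∧ freeCount G = n - s ∧ dVal G = 2 := by
  classical
  -- two distinct maximal cliques
  obtain ⟨u0, w0, hneq, hnadj⟩ : ∃ u w : Fin n, u ≠ w ∧ ¬ G.Adj u w := by
    by_contra h
    push_neg at h
    apply hnc
    ext u w
    simp only [SimpleGraph.top_adj]
    exact ⟨fun h' => h'.ne, fun h' => h u w h'⟩
  obtain ⟨C1, hC1, hu0C1⟩ := exists_maxClique_superset G (Set.pairwise_singleton u0 G.Adj)
  obtain ⟨C2, hC2, hw0C2⟩ := exists_maxClique_superset G (Set.pairwise_singleton w0 G.Adj)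
  have hu0 : u0 ∈ C1 := hu0C1 rfl
  have hw0 : w0 ∈ C2 := hw0C2 rfl
  have hC12 : C1 ≠ C2 := by
    rintro rfl
    exact hnadj (hC1.1 hu0 hw0 hneq)
  -- A is contained in every maximal clique
  have hAsub : ∀ C, IsMaxClique G C → A ⊆ C := by
    intro C hC
    rcases eq_or_ne C C1 with rfl | h
    · rw [← hint C C2 hC hC2 hC12]; exact Set.inter_subset_left
    · rw [← hint C C1 hC hC1 h]; exact Set.inter_subset_left
  -- every vertex is in a maximal clique
  have hmem : ∀ v : Fin n, ∃ C, IsMaxClique G C ∧ v ∈ C := by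
    intro v
    obtain ⟨C, hC, hsub⟩ := exists_maxClique_superset G (Set.pairwise_singleton v G.Adj)
    exact ⟨C, hC, hsub rfl⟩
  -- every vertex is adjacent to every element of A (other than itself)
  have hadjA : ∀ v a : Fin n, a ∈ A → v ≠ a → G.Adj v a := by
    intro v a haA hva
    obtain ⟨C, hC, hvC⟩ := hmem v
    exact hC.1 hvC (hAsub C hC haA) hva
  -- a maximal clique is closed under adjacency from its non-A vertices
  have hclosed : ∀ C, IsMaxClique G C → ∀ u ∈ C, u ∉ A → ∀ w, G.Adj u w → w ∈ C := by
    intro C hC u huC huA w hadj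
    obtain ⟨E, hE, hsubE⟩ := exists_maxClique_superset G
      (SimpleGraph.isClique_pair.mpr fun _ => hadj)
    have huE : u ∈ E := hsubE (by simp)
    have hwE : w ∈ E := hsubE (by simp)
    rcases eq_or_ne E C with rfl | hEC
    · exact hwE
    · exact absurd (show u ∈ A from (hint E C hE hC hEC) ▸ ⟨huE, huC⟩) huA
  -- C1 \ A and C2 \ A are nonempty
  obtain ⟨x1, hx1C, hx1A⟩ : (C1 \ A).Nonempty := by
    rw [Set.diff_nonempty]
    intro hsub
    exact hC12 (hC1.2 C2 hC2.1 (hsub.trans (hAsub C2 hC2))).symm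
  obtain ⟨x2, hx2C, hx2A⟩ : (C2 \ A).Nonempty := by
    rw [Set.diff_nonempty]
    intro hsub
    exact hC12 (hC2.2 C1 hC1.1 (hsub.trans (hAsub C1 hC1)))
  have hx12 : x1 ≠ x2 := by
    rintro rfl
    exact hx1A ((hint C1 C2 hC1 hC2 hC12) ▸ ⟨hx1C, hx2C⟩)
  have hnadj12 : ¬ G.Adj x1 x2 := fun h =>
    hx2A ((hint C1 C2 hC1 hC2 hC12) ▸ ⟨hclosed C1 hC1 x1 hx1C hx1A x2 h, hx2C⟩)
  -- A is nonempty
  have hAne : A.Nonempty := by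
    by_contra hAe
    rw [Set.not_nonempty_iff_eq_empty] at hAe
    have key : ∀ {x y : Fin n}, G.Walk x y → x ∈ C1 → y ∈ C1 := by
      intro x y p
      induction p with
      | nil => exact id
      | cons h q ih =>
          intro hx
          exact ih (hclosed C1 hC1 _ hx (by simp [hAe]) _ h)
    obtain ⟨p⟩ := hconn.preconnected x1 x2
    exact hx2A ((hint C1 C2 hC1 hC2 hC12) ▸ ⟨key p hx1C, hx2C⟩)
  -- removing A disconnects G
  have hdisc : ¬ (G.induce (Aᶜ : Set (Fin n))).Preconnected := by
    intro hpre
    obtain ⟨p⟩ := hpre ⟨x1, hx1A⟩ ⟨x2, hx2A⟩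
    have key : ∀ {a b : ↥(Aᶜ : Set (Fin n))}, (G.induce (Aᶜ : Set (Fin n))).Walk a b →
        (a : Fin n) ∈ C1 → (b : Fin n) ∈ C1 := by
      intro a b p
      induction p with
      | nil => exact id
      | @cons a b c h q ih =>
          intro ha
          exact ih (hclosed C1 hC1 a.1 ha a.2 b.1 h)
    exact hx2A ((hint C1 C2 hC1 hC2 hC12) ▸ ⟨key p hx1C, hx2C⟩)
  have hmemS : s ∈ {r | ∃ T : Set (Fin n), T.ncard = r ∧ ¬ (G.induce Tᶜ).Preconnected} :=
    ⟨A, hAcard, hdisc⟩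
  have hlow : ∀ r ∈ {r | ∃ T : Set (Fin n), T.ncard = r ∧ ¬ (G.induce Tᶜ).Preconnected},
      s ≤ r := by
    rintro r ⟨T, hT, hnp⟩
    by_contra hlt
    push_neg at hlt
    have hns : ¬ A ⊆ T := by
      intro hsub
      have := Set.ncard_le_ncard hsub (Set.toFinite T)
      omega
    obtain ⟨a, haA, haT⟩ := Set.not_subset.mp hns
    apply hnp
    intro u w
    have haTc : a ∈ (Tᶜ : Set (Fin n)) := haT
    have step : ∀ (x : ↥(Tᶜ : Set (Fin n))), (x : Fin n) ≠ a →
        (G.induce (Tᶜ : Set (Fin n))).Adj x ⟨a, haTc⟩ := by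
      intro x hx
      exact (hadjA (x : Fin n) a haA hx : G.Adj (x : Fin n) a)
    rcases eq_or_ne u w with rfl | huw
    · exact SimpleGraph.Reachable.refl _
    rcases eq_or_ne (u : Fin n) a with hu | hu
    · have hw : (w : Fin n) ≠ a := fun h => huw (Subtype.ext (hu.trans h.symm))
      have hu' : u = ⟨a, haTc⟩ := Subtype.ext hu
      rw [hu']
      exact (step w hw).symm.reachable
    rcases eq_or_ne (w : Fin n) a with hw | hw
    · have hw' : w = ⟨a, haTc⟩ := Subtype.ext hw
      rw [hw']
      exact (step u hu).reachable
    · exact (step u hu).reachable.trans (step w hw).symm.reachable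
  have hkappa : kappaVal G = s := by
    refine le_antisymm (Nat.sInf_le hmemS) (le_csInf ⟨s, hmemS⟩ hlow)
  -- free vertices = Aᶜ
  have hfree : {v : Fin n | IsFreeVertex G v} = (Aᶜ : Set (Fin n)) := by
    ext v
    simp only [Set.mem_setOf_eq, Set.mem_compl_iff]
    constructor
    · intro hfv hvA
      have h1 : G.Adj v x1 := hC1.1 (hAsub C1 hC1 hvA) hx1C (fun h => hx1A (h ▸ hvA))
      have h2 : G.Adj v x2 := hC2.1 (hAsub C2 hC2 hvA) hx2C (fun h => hx2A (h ▸ hvA))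
      exact hnadj12 (hfv x1 h1 x2 h2 hx12)
    · intro hvA u hu w hw huw
      obtain ⟨C, hC, hvC⟩ := hmem v
      exact hC.1 (hclosed C hC v hvC hvA u hu) (hclosed C hC v hvC hvA w hw) huw
  have hfc : freeCount G = n - s := by
    unfold freeCount
    rw [hfree]
    have h := Set.ncard_add_ncard_compl A
    rw [Nat.card_eq_fintype_card, Fintype.card_fin] at h
    omega
  -- d(G) = 2
  obtain ⟨a0, ha0⟩ := hAne
  have hiso : isolatedCount G = 0 := by
    have he : {v : Fin n | ∀ u, ¬ G.Adj v u} = ∅ := by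
      rw [Set.eq_empty_iff_forall_notMem]
      intro v hv
      rcases eq_or_ne v a0 with rfl | hva
      · exact hv x1 (hC1.1 (hAsub C1 hC1 ha0) hx1C (fun h => hx1A (h ▸ ha0)))
      · exact hv a0 (hadjA v a0 ha0 hva)
    rw [isolatedCount, he, Set.ncard_empty]
  haveI : Subsingleton G.ConnectedComponent := by
    constructor
    intro c d
    obtain ⟨u, rfl⟩ := c.exists_rep
    obtain ⟨w, rfl⟩ := d.exists_rep
    exact SimpleGraph.ConnectedComponent.sound (hconn.preconnected u w)
  obtain ⟨v0⟩ := hconn.nonempty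
  haveI : Unique G.ConnectedComponent :=
    ⟨⟨G.connectedComponentMk v0⟩, fun c => Subsingleton.elim _ _⟩
  have hdle : ∀ u w : Fin n, G.dist u w ≤ 2 := by
    intro u w
    rcases eq_or_ne u w with rfl | huw
    · rw [SimpleGraph.dist_self]; omega
    rcases eq_or_ne u a0 with rfl | hu
    · have : G.dist u w = 1 := SimpleGraph.dist_eq_one_iff_adj.mpr
        ((hadjA w u ha0 huw.symm).symm)
      omega
    rcases eq_or_ne w a0 with rfl | hw
    · have : G.dist u w = 1 := SimpleGraph.dist_eq_one_iff_adj.mpr (hadjA u w ha0 hu)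
      omega
    · have h1 : G.dist u a0 = 1 := SimpleGraph.dist_eq_one_iff_adj.mpr (hadjA u a0 ha0 hu)
      have h2 : G.dist a0 w = 1 := SimpleGraph.dist_eq_one_iff_adj.mpr
        ((hadjA w a0 ha0 hw).symm)
      have := hconn.dist_triangle (v := a0) (u := u) (w := w)
      omega
  have hd2 : G.dist u0 w0 = 2 := by
    have h0 : G.dist u0 w0 ≠ 0 := by
      intro h
      rcases SimpleGraph.dist_eq_zero_iff_eq_or_not_reachable.mp h with h' | h'
      · exact hneq h'
      · exact h' (hconn.preconnected u0 w0)
    have h1 : G.dist u0 w0 ≠ 1 := fun h => hnadj (SimpleGraph.dist_eq_one_iff_adj.mp h)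
    have := hdle u0 w0
    omega
  have hcd : compDiam G (default : G.ConnectedComponent) = 2 := by
    unfold compDiam
    have hmem2 : (2 : ℕ) ∈ {d | ∃ u w : Fin n,
        G.connectedComponentMk u = (default : G.ConnectedComponent) ∧
        G.connectedComponentMk w = (default : G.ConnectedComponent) ∧ G.dist u w = d} :=
      ⟨u0, w0, Subsingleton.elim _ _, Subsingleton.elim _ _, hd2⟩
    apply le_antisymm
    · apply csSup_le ⟨2, hmem2⟩
      rintro d ⟨u, w, -, -, rfl⟩
      exact hdle u w
    · have hbdd : BddAbove {d | ∃ u w : Fin n,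
          G.connectedComponentMk u = (default : G.ConnectedComponent) ∧
          G.connectedComponentMk w = (default : G.ConnectedComponent) ∧ G.dist u w = d} := by
        refine ⟨2, ?_⟩
        rintro d ⟨u, w, -, -, rfl⟩
        exact hdle u w
      exact le_csSup hbdd hmem2
  have hdval : dVal G = 2 := by
    rw [dVal, hiso, finsum_unique, hcd]
  exact ⟨hkappa, hfc, hdval⟩
end

section
/- Let G be a non-complete graph that is either a cycle C_n or of the form (C_n)_W for some subset W of the vertices of C_n (the iterated clique-completion of C_n at the vertices of W). Then the vertex-connectivity of G equals 2. -/
open MvPolynomial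

/-- The iterated clique-completion `G_W` of `G` at the vertices of a list `W`:
`G_[] = G` and `G_(v :: l) = (G_v)_l`. -/
def cliqueCompletionIter {V : Type} (G : SimpleGraph V) : List V → SimpleGraph V
  | [] => G
  | v :: l => cliqueCompletionIter (cliqueCompletion G v) l

section CliqueAux

open Fin.NatCast Fin.CommRing

variable {n : ℕ} [NeZero n]

/-- forward arc from `u` to `w` with interior in `S` -/
def Fwd (S : Set (Fin n)) (u w : Fin n) : Prop :=
  ∃ k : ℕ, 0 < k ∧ k < n ∧ w = u + (k : Fin n) ∧
    ∀ j : ℕ, 0 < j → j < k → u + (j : Fin n) ∈ S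

/-- the completion of the cycle along `S` -/
def Hgr (S : Set (Fin n)) : SimpleGraph (Fin n) where
  Adj u w := u ≠ w ∧ (Fwd S u w ∨ Fwd S w u)
  symm := ⟨fun u w ⟨h, h2⟩ => ⟨h.symm, h2.symm⟩⟩
  loopless := ⟨fun u ⟨h, _⟩ => h rfl⟩

lemma hgr_adj {S : Set (Fin n)} {u w : Fin n} :
    (Hgr S).Adj u w ↔ u ≠ w ∧ (Fwd S u w ∨ Fwd S w u) := Iff.rfl

lemma fwd_mono {S S' : Set (Fin n)} (h : S ⊆ S') {u w : Fin n} (hf : Fwd S u w) :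
    Fwd S' u w := by
  obtain ⟨k, h1, h2, h3, h4⟩ := hf
  exact ⟨k, h1, h2, h3, fun j hj hjk => h (h4 j hj hjk)⟩

lemma natCast_fin_inj {a b : ℕ} (ha : a < n) (hb : b < n) (h : (a : Fin n) = (b : Fin n)) :
    a = b := by
  rwa [Fin.ext_iff, Fin.val_cast_of_lt ha, Fin.val_cast_of_lt hb] at h

lemma add_natCast_ne (u : Fin n) {k : ℕ} (h0 : 0 < k) (hn : k < n) : u + (k : Fin n) ≠ u := by
  intro h
  rw [add_eq_left] at h
  have hv : ((k : Fin n)).val = 0 := by rw [h, Fin.val_zero]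
  rw [Fin.val_natCast, Nat.mod_eq_of_lt hn] at hv
  omega

lemma fwd_ne {S : Set (Fin n)} {u w : Fin n} (h : Fwd S u w) : w ≠ u := by
  obtain ⟨k, h1, h2, h3, _⟩ := h
  rw [h3]; exact add_natCast_ne u h1 h2


lemma fwd_comp {S : Set (Fin n)} {u v w : Fin n} (h1 : Fwd S u v) (h2 : Fwd S v w)
    (hne : u ≠ w) : Fwd (insert v S) u w := by
  obtain ⟨k1, hk10, hk1n, hv, hint1⟩ := h1
  obtain ⟨k2, hk20, hk2n, hw, hint2⟩ := h2
  have hw' : w = u + ((k1 + k2 : ℕ) : Fin n) := by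
    rw [hw, hv]; push_cast; ring
  rcases lt_trichotomy (k1 + k2) n with hlt | heq | hgt
  · refine ⟨k1 + k2, by omega, hlt, hw', ?_⟩
    intro j hj0 hjk
    rcases lt_trichotomy j k1 with hj | hj | hj
    · exact Set.mem_insert_iff.2 (Or.inr (hint1 j hj0 hj))
    · subst hj; rw [← hv]; exact Set.mem_insert _ _
    · have : u + (j : Fin n) = v + ((j - k1 : ℕ) : Fin n) := by
        rw [hv]; rw [add_assoc, ← Nat.cast_add]; congr 2; omega
      rw [this]
      exact Set.mem_insert_iff.2 (Or.inr (hint2 (j - k1) (by omega) (by omega)))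
  · exfalso
    apply hne
    rw [hw', heq, Fin.natCast_self, add_zero]
  · have hcast : ((k1 + k2 : ℕ) : Fin n) = ((k1 + k2 - n : ℕ) : Fin n) := by
      conv_lhs => rw [show k1 + k2 = (k1 + k2 - n) + n from by omega]
      push_cast; rw [Fin.natCast_self, add_zero]
    have hm : w = u + ((k1 + k2 - n : ℕ) : Fin n) := by rw [hw', hcast]
    refine fwd_mono (Set.subset_insert _ _) ⟨k1 + k2 - n, by omega, by omega, hm, ?_⟩
    intro j hj0 hjk
    exact hint1 j hj0 (by omega)

lemma fwd_diff_out {S : Set (Fin n)} {v u w : Fin n} (h1 : Fwd S v u) (h2 : Fwd S v w)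
    (hne : u ≠ w) : Fwd S u w ∨ Fwd S w u := by
  obtain ⟨k1, hk10, hk1n, hu, hint1⟩ := h1
  obtain ⟨k2, hk20, hk2n, hw, hint2⟩ := h2
  rcases lt_trichotomy k1 k2 with hlt | heq | hgt
  · left
    refine ⟨k2 - k1, by omega, by omega, ?_, ?_⟩
    · rw [hw, hu, add_assoc, ← Nat.cast_add]; congr 2; omega
    · intro j hj0 hjk
      have : u + (j : Fin n) = v + ((k1 + j : ℕ) : Fin n) := by
        rw [hu, add_assoc, ← Nat.cast_add]
      rw [this]
      exact hint2 (k1 + j) (by omega) (by omega)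
  · exact absurd (by rw [hu, hw, heq]) hne
  · right
    refine ⟨k1 - k2, by omega, by omega, ?_, ?_⟩
    · rw [hu, hw, add_assoc, ← Nat.cast_add]; congr 2; omega
    · intro j hj0 hjk
      have : w + (j : Fin n) = v + ((k2 + j : ℕ) : Fin n) := by
        rw [hw, add_assoc, ← Nat.cast_add]
      rw [this]
      exact hint1 (k2 + j) (by omega) (by omega)

lemma fwd_diff_in {S : Set (Fin n)} {u v w : Fin n} (h1 : Fwd S u v) (h2 : Fwd S w v)
    (hne : u ≠ w) : Fwd S u w ∨ Fwd S w u := by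
  obtain ⟨k1, hk10, hk1n, hv1, hint1⟩ := h1
  obtain ⟨k2, hk20, hk2n, hv2, hint2⟩ := h2
  rcases lt_trichotomy k1 k2 with hlt | heq | hgt
  · right
    refine ⟨k2 - k1, by omega, by omega, ?_, ?_⟩
    · have : v = w + ((k2 - k1 : ℕ) : Fin n) + (k1 : Fin n) := by
        rw [hv2, add_assoc, ← Nat.cast_add]; congr 2; omega
      rw [hv1] at this
      exact (add_left_injective _ this).symm ▸ rfl
    · intro j hj0 hjk
      exact hint2 j hj0 (by omega)
  · exact absurd (by
      have : u + (k1 : Fin n) = w + (k1 : Fin n) := by rw [← hv1, hv2, heq]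
      exact add_left_injective _ this) hne
  · left
    refine ⟨k1 - k2, by omega, by omega, ?_, ?_⟩
    · have : v = u + ((k1 - k2 : ℕ) : Fin n) + (k2 : Fin n) := by
        rw [hv1, add_assoc, ← Nat.cast_add]; congr 2; omega
      rw [hv2] at this
      exact (add_left_injective _ this).symm ▸ rfl
    · intro j hj0 hjk
      exact hint1 j hj0 (by omega)

lemma fwd_split {S : Set (Fin n)} {u w v : Fin n} (h : Fwd (insert v S) u w) :
    Fwd S u w ∨ (Fwd S u v ∧ Fwd S v w) := by
  obtain ⟨k, hk0, hkn, hw, hint⟩ := h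
  by_cases hv : ∃ j0 : ℕ, 0 < j0 ∧ j0 < k ∧ u + (j0 : Fin n) = v
  · obtain ⟨j0, hj00, hj0k, hj0v⟩ := hv
    right
    constructor
    · refine ⟨j0, hj00, by omega, hj0v.symm, ?_⟩
      intro j hj0 hjk
      rcases hint j hj0 (by omega) with hmem | hmem
      · exfalso
        rw [← hj0v] at hmem
        have := natCast_fin_inj (by omega : j < n) (by omega : j0 < n)
          (add_left_cancel hmem)
        omega
      · exact hmem
    · refine ⟨k - j0, by omega, by omega, ?_, ?_⟩
      · rw [hw, ← hj0v, add_assoc, ← Nat.cast_add]; congr 2; omega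
      · intro j hj0 hjk
        have heq : v + (j : Fin n) = u + ((j0 + j : ℕ) : Fin n) := by
          rw [← hj0v, add_assoc, ← Nat.cast_add]
        rw [heq]
        rcases hint (j0 + j) (by omega) (by omega) with hmem | hmem
        · exfalso
          rw [← hj0v] at hmem
          have := natCast_fin_inj (by omega : j0 + j < n) (by omega : j0 < n)
            (add_left_cancel hmem)
          omega
        · exact hmem
  · left
    refine ⟨k, hk0, hkn, hw, ?_⟩
    intro j hj0 hjk
    rcases hint j hj0 hjk with hmem | hmem
    · exact absurd ⟨j, hj0, hjk, hmem⟩ hv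
    · exact hmem


lemma cc_adj {G : SimpleGraph (Fin n)} {v u w : Fin n} :
    (cliqueCompletion G v).Adj u w ↔ G.Adj u w ∨ (u ≠ w ∧ G.Adj v u ∧ G.Adj v w) := Iff.rfl

lemma completion_Hgr (S : Set (Fin n)) (v : Fin n) :
    cliqueCompletion (Hgr S) v = Hgr (insert v S) := by
  ext u w
  rw [cc_adj, hgr_adj, hgr_adj, hgr_adj, hgr_adj]
  constructor
  · rintro (⟨hne, h⟩ | ⟨hne, ⟨hvu, h1⟩, ⟨hvw, h2⟩⟩)
    · exact ⟨hne, h.imp (fwd_mono (Set.subset_insert _ _)) (fwd_mono (Set.subset_insert _ _))⟩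
    · refine ⟨hne, ?_⟩
      rcases h1 with h1 | h1 <;> rcases h2 with h2 | h2
      · exact (fwd_diff_out h1 h2 hne).imp (fwd_mono (Set.subset_insert _ _))
          (fwd_mono (Set.subset_insert _ _))
      · exact Or.inr (fwd_comp h2 h1 (Ne.symm hne))
      · exact Or.inl (fwd_comp h1 h2 hne)
      · exact (fwd_diff_in h1 h2 hne).imp (fwd_mono (Set.subset_insert _ _))
          (fwd_mono (Set.subset_insert _ _))
  · rintro ⟨hne, h | h⟩
    · rcases fwd_split h with h' | ⟨h1, h2⟩
      · exact Or.inl ⟨hne, Or.inl h'⟩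
      · exact Or.inr ⟨hne, ⟨(fwd_ne h1).symm ∘ Eq.symm, Or.inr h1⟩, ⟨fwd_ne h2 ∘ Eq.symm, Or.inl h2⟩⟩
    · rcases fwd_split h with h' | ⟨h1, h2⟩
      · exact Or.inl ⟨hne, Or.inr h'⟩
      · exact Or.inr ⟨hne, ⟨fwd_ne h2 ∘ Eq.symm, Or.inl h2⟩, ⟨(fwd_ne h1).symm ∘ Eq.symm, Or.inr h1⟩⟩


end CliqueAux

section CliqueAux2
open Fin.NatCast Fin.CommRing
variable {n : ℕ} [NeZero n]

lemma iter_Hgr (l : List (Fin n)) (S : Set (Fin n)) :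
    cliqueCompletionIter (Hgr S) l = Hgr (S ∪ {x | x ∈ l}) := by
  induction l generalizing S with
  | nil =>
    show Hgr S = _
    congr 1
    ext x
    simp
  | cons v l ih =>
    show cliqueCompletionIter (cliqueCompletion (Hgr S) v) l = _
    rw [completion_Hgr, ih]
    congr 1
    ext x
    simp [List.mem_cons]
    tauto

lemma hgr_empty : Hgr (∅ : Set (Fin n)) = SimpleGraph.cycleGraph n := by
  ext u w
  rw [hgr_adj, SimpleGraph.cycleGraph_adj']
  constructor
  · rintro ⟨hne, h | h⟩ <;>
    · obtain ⟨k, hk0, hkn, hw, hint⟩ := h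
      have hk1 : k = 1 := by
        by_contra hk
        exact (hint 1 one_pos (by omega)).elim
      subst hk1
      first
      | · refine Or.inr ?_
          rw [hw, add_sub_cancel_left, Fin.val_natCast, Nat.mod_eq_of_lt hkn]
      | · refine Or.inl ?_
          rw [hw, add_sub_cancel_left, Fin.val_natCast, Nat.mod_eq_of_lt hkn]
  · intro h
    have h1n : 1 < n := by
      rcases h with h | h
      · have := (u - w).isLt; omega
      · have := (w - u).isLt; omega
    rcases h with h | h
    · refine ⟨?_, Or.inr ⟨1, one_pos, h1n, ?_, by omega⟩⟩
      · intro hh; rw [hh, sub_self, Fin.val_zero] at h; omega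
      · have : u - w = ((1 : ℕ) : Fin n) := by
          rw [Fin.ext_iff, Fin.val_natCast, Nat.mod_eq_of_lt h1n, h]
        rw [← this]; ring
    · refine ⟨?_, Or.inl ⟨1, one_pos, h1n, ?_, by omega⟩⟩
      · intro hh; rw [hh, sub_self, Fin.val_zero] at h; omega
      · have : w - u = ((1 : ℕ) : Fin n) := by
          rw [Fin.ext_iff, Fin.val_natCast, Nat.mod_eq_of_lt h1n, h]
        rw [← this]; ring


lemma reach_chain (S T : Set (Fin n)) (hn : 1 < n) :
    ∀ (k : ℕ) (u w : Fin n) (hu : u ∈ Tᶜ) (hw : w ∈ Tᶜ), w = u + (k : Fin n) →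
      (∀ j : ℕ, 0 < j → j < k → u + (j : Fin n) ∉ T) →
      ((Hgr S).induce Tᶜ).Reachable ⟨u, hu⟩ ⟨w, hw⟩ := by
  intro k
  induction k with
  | zero =>
    intro u w hu hw hwe _
    rw [Nat.cast_zero, add_zero] at hwe
    subst hwe
    exact SimpleGraph.Reachable.refl _
  | succ k ih =>
    intro u w hu hw hwe hint
    have hadj : ∀ (x y : Fin n) (hx : x ∈ Tᶜ) (hy : y ∈ Tᶜ), y = x + (1 : Fin n) →
        ((Hgr S).induce Tᶜ).Adj ⟨x, hx⟩ ⟨y, hy⟩ := by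
      intro x y hx hy hyx
      show (Hgr S).Adj x y
      refine ⟨?_, Or.inl ⟨1, one_pos, hn, by rw [hyx]; norm_num, by omega⟩⟩
      intro hxy
      exact add_natCast_ne x one_pos hn (by rw [Nat.cast_one, ← hyx, hxy])
    rcases Nat.eq_zero_or_pos k with hk0 | hk0
    · subst hk0
      refine (hadj u w hu hw ?_).reachable
      rw [hwe]; norm_num
    · have hxT : u + (k : Fin n) ∈ Tᶜ := hint k hk0 (by omega)
      have hstep : ((Hgr S).induce Tᶜ).Adj ⟨u + (k : Fin n), hxT⟩ ⟨w, hw⟩ := by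
        refine hadj _ _ _ _ ?_
        rw [hwe, add_assoc]
        congr 1
        push_cast
        ring
      exact (ih u (u + (k : Fin n)) hu hxT rfl fun j hj0 hjk => hint j hj0 (by omega)).trans
        hstep.reachable

lemma hgr_remove_one (S T : Set (Fin n)) (hT : T.ncard ≤ 1) :
    ((Hgr S).induce Tᶜ).Preconnected := by
  rintro ⟨u, hu⟩ ⟨w, hw⟩
  by_cases huw : u = w
  · subst huw; exact SimpleGraph.Reachable.refl _
  have hn : 1 < n := by
    have h1 := u.isLt
    have h2 := w.isLt
    have : u.val ≠ w.val := fun hh => huw (Fin.ext hh)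
    omega
  set d := (w - u).val with hd
  have hdn : d < n := (w - u).isLt
  have hd0 : 0 < d := by
    rcases Nat.eq_zero_or_pos d with h0 | h0
    · exfalso
      apply huw
      have hz : w - u = 0 := by
        rw [Fin.ext_iff, Fin.val_zero, ← hd]
        exact h0
      exact (sub_eq_zero.mp hz).symm
    · exact h0
  have hwe : w = u + (d : Fin n) := by
    rw [hd, Fin.cast_val_eq_self]
    ring
  have hue : u = w + ((n - d : ℕ) : Fin n) := by
    rw [hwe, add_assoc, ← Nat.cast_add,
      show d + (n - d) = n from by omega, Fin.natCast_self, add_zero]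
  by_cases hA : ∀ j : ℕ, 0 < j → j < d → u + (j : Fin n) ∉ T
  · exact reach_chain S T hn d u w hu hw hwe hA
  · by_cases hB : ∀ j : ℕ, 0 < j → j < n - d → w + (j : Fin n) ∉ T
    · exact (reach_chain S T hn (n - d) w u hw hu hue hB).symm
    · exfalso
      push_neg at hA hB
      obtain ⟨j1, hj10, hj1d, ha⟩ := hA
      obtain ⟨j2, hj20, hj2nd, hb⟩ := hB
      have hbe : w + (j2 : Fin n) = u + ((d + j2 : ℕ) : Fin n) := by
        rw [hwe, add_assoc, ← Nat.cast_add]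
      have hne2 : u + (j1 : Fin n) ≠ u + ((d + j2 : ℕ) : Fin n) := by
        intro hh
        have := natCast_fin_inj (by omega : j1 < n) (by omega : d + j2 < n)
          (add_left_cancel hh)
        omega
      have : 1 < T.ncard :=
        (Set.one_lt_ncard_iff (Set.toFinite T)).2
          ⟨_, _, ha, hbe ▸ hb, hne2⟩
      omega


lemma eq_add_pos (u x : Fin n) : x = u + (((x - u)).val : Fin n) := by
  rw [Fin.cast_val_eq_self]; ring

lemma pos_of_eq_add {u x : Fin n} {c : ℕ} (hc : c < n) (h : x = u + (c : Fin n)) :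
    ((x - u)).val = c := by
  rw [h, add_sub_cancel_left, Fin.val_natCast, Nat.mod_eq_of_lt hc]

lemma shift_eq {u x : Fin n} {i t c : ℕ} (hx : x = u + (i : Fin n)) (h : i + t = c) :
    x + (t : Fin n) = u + (c : Fin n) := by
  rw [hx, add_assoc, ← Nat.cast_add, h]

lemma cast_reduce (c : ℕ) : ((n + c : ℕ) : Fin n) = (c : Fin n) := by
  push_cast
  rw [Fin.natCast_self, zero_add]

lemma pos_mod {u x y : Fin n} {i k : ℕ} (hx : x = u + (i : Fin n)) (hy : y = x + (k : Fin n)) :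
    ((y - u)).val = (i + k) % n := by
  have : y = u + ((i + k : ℕ) : Fin n) := by rw [hy, hx, add_assoc, ← Nat.cast_add]
  rw [this, add_sub_cancel_left, Fin.val_natCast]

lemma cross {S : Set (Fin n)} {u : Fin n} {j1 m : ℕ} (hj10 : 0 < j1) (hj1m : j1 < m)
    (hmn : m < n) (ha : u + (j1 : Fin n) ∉ S) (hb : u + (m : Fin n) ∉ S) {x y : Fin n}
    (hya : y ≠ u + (j1 : Fin n)) (hyb : y ≠ u + (m : Fin n))
    (hadj : (Hgr S).Adj x y)
    (hx1 : j1 < ((x - u)).val) (hx2 : ((x - u)).val < m) :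
    j1 < ((y - u)).val ∧ ((y - u)).val < m := by
  set i := ((x - u)).val with hidef
  set i' := ((y - u)).val with hi'def
  have hin : i < n := (x - u).isLt
  have hi'n : i' < n := (y - u).isLt
  have hxe : x = u + (i : Fin n) := eq_add_pos u x
  have hye : y = u + (i' : Fin n) := eq_add_pos u y
  rcases hadj.2 with ⟨k, hk0, hkn, hyk, hint⟩ | ⟨k, hk0, hkn, hxk, hint⟩
  · -- y = x + k
    have hmod : i' = (i + k) % n := pos_mod hxe hyk
    by_cases hbm : m < i + k
    · exfalso
      apply hb
      have := hint (m - i) (by omega) (by omega)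
      rwa [shift_eq hxe (by omega : i + (m - i) = m)] at this
    · have hik : i + k < n := by omega
      have hi' : i' = i + k := by rw [hmod, Nat.mod_eq_of_lt hik]
      have hne : i' ≠ m := by
        intro hh
        exact hyb (by rw [hye, hh])
      omega
  · -- x = y + k
    have hmod : i = (i' + k) % n := pos_mod hye hxk
    have hnea : i' ≠ j1 := fun hh => hya (by rw [hye, hh])
    have hneb : i' ≠ m := fun hh => hyb (by rw [hye, hh])
    by_cases hj : j1 < i'
    · refine ⟨hj, ?_⟩
      rcases Nat.lt_or_ge (i' + k) n with hc | hc
      · have : i = i' + k := by rw [hmod, Nat.mod_eq_of_lt hc]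
        omega
      · exfalso
        have hieq : i = i' + k - n := by
          rw [hmod, Nat.mod_eq_sub_mod hc, Nat.mod_eq_of_lt (by omega)]
        apply ha
        have := hint (n - i' + j1) (by omega) (by omega)
        rwa [shift_eq hye (by omega : i' + (n - i' + j1) = n + j1), cast_reduce] at this
    · exfalso
      have hi'j1 : i' < j1 := by omega
      have htk : j1 - i' < k := by
        rcases Nat.lt_or_ge (i' + k) n with hc | hc
        · have : i = i' + k := by rw [hmod, Nat.mod_eq_of_lt hc]
          omega
        · omega
      apply ha
      have := hint (j1 - i') (by omega) htk
      rwa [shift_eq hye (by omega : i' + (j1 - i') = j1)] at this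

lemma walk_pres {S T : Set (Fin n)} (P : Fin n → Prop)
    (hP : ∀ x y : Fin n, x ∈ Tᶜ → y ∈ Tᶜ → (Hgr S).Adj x y → P x → P y) :
    ∀ {p q : ↥(Tᶜ)} (_ : ((Hgr S).induce Tᶜ).Walk p q), P p.1 → P q.1 := by
  intro p q wk
  induction wk with
  | nil => exact id
  | @cons a b c h _ ih => exact fun hp => ih (hP a.1 b.1 a.2 b.2 h hp)

lemma hgr_cut {S : Set (Fin n)} (h : Hgr S ≠ ⊤) :
    ∃ T : Set (Fin n), T.ncard = 2 ∧ ¬ ((Hgr S).induce Tᶜ).Preconnected := by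
  have hpair : ∃ u w : Fin n, u ≠ w ∧ ¬ (Hgr S).Adj u w := by
    by_contra hcon
    push_neg at hcon
    apply h
    ext u w
    simp only [SimpleGraph.top_adj]
    exact ⟨fun hh => hh.1, fun hh => hcon u w hh⟩
  obtain ⟨u, w, hne, hnadj⟩ := hpair
  rw [hgr_adj] at hnadj
  have hno : ¬ (Fwd S u w ∨ Fwd S w u) := fun hh => hnadj ⟨hne, hh⟩
  have hno1 : ¬ Fwd S u w := fun hh => hno (Or.inl hh)
  have hno2 : ¬ Fwd S w u := fun hh => hno (Or.inr hh)
  set d := ((w - u)).val with hd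
  have hdn : d < n := (w - u).isLt
  have hd0 : 0 < d := by
    rcases Nat.eq_zero_or_pos d with h0 | h0
    · exfalso
      apply hne
      have hz : w - u = 0 := by rw [Fin.ext_iff, Fin.val_zero, ← hd]; exact h0
      exact (sub_eq_zero.mp hz).symm
    · exact h0
  have hwe : w = u + (d : Fin n) := eq_add_pos u w
  have hue : u = w + ((n - d : ℕ) : Fin n) := by
    rw [hwe, add_assoc, ← Nat.cast_add, show d + (n - d) = n from by omega,
      Fin.natCast_self, add_zero]
  have hj1ex : ∃ j, 0 < j ∧ j < d ∧ u + (j : Fin n) ∉ S := by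
    by_contra hcon
    push_neg at hcon
    exact hno1 ⟨d, hd0, hdn, hwe, fun j hj0 hjd => hcon j hj0 hjd⟩
  have hj2ex : ∃ j, 0 < j ∧ j < n - d ∧ w + (j : Fin n) ∉ S := by
    by_contra hcon
    push_neg at hcon
    exact hno2 ⟨n - d, by omega, by omega, hue, fun j hj0 hjd => hcon j hj0 hjd⟩
  obtain ⟨j1, hj10, hj1d, ha⟩ := hj1ex
  obtain ⟨j2, hj20, hj2nd, hb'⟩ := hj2ex
  set m := d + j2 with hm
  have hmn : m < n := by omega
  have hbeq : w + (j2 : Fin n) = u + (m : Fin n) := shift_eq hwe rfl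
  have hb : u + (m : Fin n) ∉ S := by rwa [hbeq] at hb'
  refine ⟨{u + (j1 : Fin n), u + (m : Fin n)}, Set.ncard_pair ?_, ?_⟩
  · intro hh
    have := natCast_fin_inj (by omega : j1 < n) hmn (add_left_cancel hh)
    omega
  · set T : Set (Fin n) := {u + (j1 : Fin n), u + (m : Fin n)} with hT
    have hdiff : ∀ (z : Fin n) (c : ℕ), c < n → z = u + (c : Fin n) → c ≠ j1 → c ≠ m → z ∈ Tᶜ := by
      intro z c hcn hz hc1 hc2
      simp only [hT, Set.mem_compl_iff, Set.mem_insert_iff, Set.mem_singleton_iff]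
      push_neg
      constructor
      · intro hh
        exact hc1 (natCast_fin_inj hcn (by omega) (add_left_cancel (hz ▸ hh)))
      · intro hh
        exact hc2 (natCast_fin_inj hcn hmn (add_left_cancel (hz ▸ hh)))
    have huT : u ∈ Tᶜ := hdiff u 0 (by omega) (by rw [Nat.cast_zero, add_zero]) (by omega) (by omega)
    have hwT : w ∈ Tᶜ := hdiff w d hdn hwe (by omega) (by omega)
    intro hpre
    have hreach := hpre ⟨w, hwT⟩ ⟨u, huT⟩
    have hP : ∀ x y : Fin n, x ∈ Tᶜ → y ∈ Tᶜ → (Hgr S).Adj x y →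
        (j1 < ((x - u)).val ∧ ((x - u)).val < m) →
        (j1 < ((y - u)).val ∧ ((y - u)).val < m) := by
      intro x y hxT hyT hadj hx
      have hyT' := hyT
      simp only [hT, Set.mem_compl_iff, Set.mem_insert_iff, Set.mem_singleton_iff] at hyT'
      push_neg at hyT'
      exact cross hj10 (by omega) hmn ha hb hyT'.1 hyT'.2 hadj hx.1 hx.2
    obtain ⟨wk⟩ := hreach
    have hPw : j1 < ((w - u)).val ∧ ((w - u)).val < m := by
      rw [← hd]; exact ⟨hj1d, by omega⟩
    have hPu := walk_pres _ hP wk hPw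
    rw [sub_self, Fin.val_zero] at hPu
    omega

end CliqueAux2

/-- Theorem 5.3: if `G` is non-complete and is either a cycle `C_n` or of
the form `(C_n)_W` for some subset `W` of the vertices of `C_n`, then `κ(G) = 2`. -/
theorem kappa_cycle_completion (n : ℕ) (G : SimpleGraph (Fin n)) (hnc : G ≠ ⊤)
    (h : G = SimpleGraph.cycleGraph n ∨
      ∃ l : List (Fin n), l.Nodup ∧ G = cliqueCompletionIter (SimpleGraph.cycleGraph n) l) :
    kappaVal G = 2 := by
  rcases Nat.eq_zero_or_pos n with hn0 | hn0
  · subst hn0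
    exact absurd (by ext u w; exact u.elim0) hnc
  have hNZ : NeZero n := ⟨by omega⟩
  obtain ⟨l, hG⟩ : ∃ l : List (Fin n), G = cliqueCompletionIter (SimpleGraph.cycleGraph n) l := by
    rcases h with h | ⟨l, _, h⟩
    · exact ⟨[], h⟩
    · exact ⟨l, h⟩
  have hG' : G = Hgr {x | x ∈ l} := by
    rw [hG, ← hgr_empty, iter_Hgr, Set.empty_union]
  subst hG'
  obtain ⟨T2, hT2card, hT2⟩ := hgr_cut hnc
  unfold kappaVal
  apply le_antisymm
  · exact Nat.sInf_le ⟨T2, hT2card, hT2⟩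
  · refine le_csInf ⟨2, T2, hT2card, hT2⟩ ?_
    rintro r ⟨T, hTcard, hTpre⟩
    by_contra hr
    push_neg at hr
    exact hTpre (hgr_remove_one _ T (by omega))
end
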